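/- Let G and H be topological groups acting continuously, freely, properly and transitively on a nonempty locally compact Hausdorff space P, with G acting on the left, H acting on the right, and the two actions commuting. Fix x ∈ P. Then the map φₓ : G → H, where φₓ(g) is the unique h ∈ H with g • x = x • h, is an isomorphism of topological groups, i.e. a group isomorphism that is also a homeomorphism. -/

import Mathlib

open MulOpposite

/-- Auxiliary: for a continuous, free, transitive, proper action of `G` on a
locally compact Hausdorff space `P`, the orbit map at any point is a homeomorphism. -/
lemma aux_orbit_homeo {G P : Type*} [Group G] [TopologicalSpace G]
    [TopologicalSpace P] [LocallyCompactSpace P] [T2Space P]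
    [MulAction G P] [ContinuousSMul G P]
    (hfree : ∀ (g : G) (p : P), g • p = p → g = 1)
    (htrans : ∀ p q : P, ∃ g : G, g • p = q)
    (hproper : IsProperMap (fun gp : G × P => (gp.1 • gp.2, gp.2)))
    (x : P) : IsHomeomorph (fun g : G => g • x) := by
  have hcont : Continuous fun g : G => g • x := continuous_id.smul continuous_const
  have hinj : Function.Injective fun g : G => g • x := by
    intro a b hab
    have h1 : (b⁻¹ * a) • x = x := by
      rw [mul_smul]; simp only at hab; rw [hab, inv_smul_smul]
    have := hfree _ _ h1
    have : b * (b⁻¹ * a) = b * 1 := by rw [this]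
    simpa [mul_assoc] using this
  have hbij : Function.Bijective fun g : G => g • x := ⟨hinj, fun p => htrans x p⟩
  -- the pair map g ↦ (g, x) is a closed embedding, hence proper
  have hemb : Topology.IsClosedEmbedding (fun g : G => (g, x)) := by
    refine ⟨Function.LeftInverse.isEmbedding (f := Prod.fst) (fun g => rfl)
      continuous_fst (continuous_id.prodMk continuous_const), ?_⟩
    have : Set.range (fun g : G => (g, x)) = Set.univ ×ˢ {x} := by
      ext p; simp [Prod.ext_iff, eq_comm]
    rw [this]
    exact isClosed_univ.prod isClosed_singleton
  have hcomp : IsProperMap ((fun gp : G × P => (gp.1 • gp.2, gp.2)) ∘ (fun g : G => (g, x))) :=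
    hproper.comp hemb.isProperMap
  have hproper' : IsProperMap (fun g : G => g • x) := by
    rw [isProperMap_iff_isCompact_preimage]
    refine ⟨hcont, fun K hK => ?_⟩
    have h1 : (fun g : G => g • x) ⁻¹' K =
        ((fun gp : G × P => (gp.1 • gp.2, gp.2)) ∘ (fun g : G => (g, x))) ⁻¹' (K ×ˢ {x}) := by
      ext g; simp
    rw [h1]
    exact hcomp.isCompact_preimage (hK.prod isCompact_singleton)
  exact isHomeomorph_iff_continuous_isClosedMap_bijective.2
    ⟨hcont, hproper'.isClosedMap, hbij⟩

/-- If topological groups `G` and `H` act continuously, freely, properly and transitively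
on a nonempty locally compact Hausdorff space `P` (on the left and right respectively,
the right action encoded via `Hᵐᵒᵖ`), the actions commute, `x ∈ P`, and `φ : G → H`
satisfies `g • x = x • φ g` for all `g`, then `φ` is an isomorphism of topological groups:
a group homomorphism (hence isomorphism) which is also a homeomorphism. -/
theorem stmt3 {G H P : Type*}
    [Group G] [TopologicalSpace G] [IsTopologicalGroup G]
    [Group H] [TopologicalSpace H] [IsTopologicalGroup H]
    [TopologicalSpace P] [LocallyCompactSpace P] [T2Space P] [Nonempty P]
    [MulAction G P] [ContinuousSMul G P]
    [MulAction Hᵐᵒᵖ P] [ContinuousSMul Hᵐᵒᵖ P]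
    (hcomm : ∀ (g : G) (h : H) (p : P),
      MulOpposite.op h • (g • p) = g • (MulOpposite.op h • p))
    (hGfree : ∀ (g : G) (p : P), g • p = p → g = 1)
    (hGtrans : ∀ p q : P, ∃ g : G, g • p = q)
    (hGproper : IsProperMap (fun gp : G × P => (gp.1 • gp.2, gp.2)))
    (hHfree : ∀ (h : H) (p : P), MulOpposite.op h • p = p → h = 1)
    (hHtrans : ∀ p q : P, ∃ h : H, MulOpposite.op h • p = q)
    (hHproper : IsProperMap (fun hp : H × P => (MulOpposite.op hp.1 • hp.2, hp.2)))
    (x : P) (φ : G → H)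
    (hφ : ∀ g : G, g • x = MulOpposite.op (φ g) • x) :
    (∀ g₁ g₂ : G, φ (g₁ * g₂) = φ g₁ * φ g₂) ∧ IsHomeomorph φ := by
  -- injectivity of the H-orbit map at x
  have hHinj : ∀ h₁ h₂ : H, op h₁ • x = op h₂ • x → h₁ = h₂ := by
    intro h₁ h₂ hh
    have h1 : op (h₁ * h₂⁻¹) • x = x := by
      rw [op_mul, mul_smul, hh, ← mul_smul, ← op_mul, mul_inv_cancel, op_one, one_smul]
    have := hHfree _ _ h1
    have : h₁ * h₂⁻¹ * h₂ = 1 * h₂ := by rw [this]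
    simpa [mul_assoc] using this
  constructor
  · intro g₁ g₂
    apply hHinj
    rw [← hφ (g₁ * g₂), mul_smul, op_mul, mul_smul, ← hφ g₁, hcomm, ← hφ g₂]
  · -- both orbit maps are homeomorphisms
    have hG : IsHomeomorph (fun g : G => g • x) :=
      aux_orbit_homeo hGfree hGtrans hGproper x
    have hHfree' : ∀ (h : Hᵐᵒᵖ) (p : P), h • p = p → h = 1 := by
      intro h p hp
      rw [← op_unop h] at hp
      rw [← op_unop h, hHfree _ _ hp, op_one]
    have hHtrans' : ∀ p q : P, ∃ h : Hᵐᵒᵖ, h • p = q := by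
      intro p q
      obtain ⟨h, hh⟩ := hHtrans p q
      exact ⟨op h, hh⟩
    have hHproper' : IsProperMap (fun hp : Hᵐᵒᵖ × P => (hp.1 • hp.2, hp.2)) := by
      have heq : (fun hp : Hᵐᵒᵖ × P => (hp.1 • hp.2, hp.2)) =
          (fun hp : H × P => (op hp.1 • hp.2, hp.2)) ∘
            (fun hp : Hᵐᵒᵖ × P => (hp.1.unop, hp.2)) := by
        ext ⟨h, p⟩ <;> simp
      rw [heq]
      refine IsProperMap.comp hHproper ?_
      exact (((MulOpposite.opHomeomorph : H ≃ₜ Hᵐᵒᵖ).symm.isHomeomorph).prodMap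
        (IsHomeomorph.id (X := P))).isProperMap
    have hHo : IsHomeomorph (fun h : Hᵐᵒᵖ => h • x) :=
      aux_orbit_homeo hHfree' hHtrans' hHproper' x
    have hH : IsHomeomorph (fun h : H => op h • x) :=
      hHo.comp (MulOpposite.opHomeomorph : H ≃ₜ Hᵐᵒᵖ).isHomeomorph
    -- φ = (H-orbit map)⁻¹ ∘ (G-orbit map)
    let eH : H ≃ₜ P := hH.homeomorph _
    have hφeq : φ = eH.symm ∘ (fun g : G => g • x) := by
      ext g
      apply eH.injective
      simp only [Function.comp_apply, Homeomorph.apply_symm_apply]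
      have : eH (φ g) = op (φ g) • x := rfl
      rw [this, ← hφ g]
    rw [hφeq]
    exact eH.symm.isHomeomorph.comp hG
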